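/- Let d ≥ 7 be an integer, let a > 0, and let f : [0,∞) → ℝ be a smooth function satisfying the shrinker equation f''(y) + ((d-1)/y - y/2) f'(y) - (d-1)/(2y²) sin(2 f(y)) = 0 for all y > 0, with f(0) = 0 and f'(0) = a. Then the function h(y) = y³ f'(y) satisfies h'(y) > 0 for all y > 0. -/

import Mathlib

open Real Set Filter Topology

namespace HDPaux

noncomputable def RR (k : ℝ) (f g : ℝ → ℝ) (z : ℝ) : ℝ :=
  -(k / z - z / 2) * g z + k / (2 * z ^ 2) * Real.sin (2 * f z)

noncomputable def dRR (k : ℝ) (f g : ℝ → ℝ) (z : ℝ) : ℝ :=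
  k / z ^ 2 * g z - k / z * RR k f g z + g z / 2 + z / 2 * RR k f g z
    - k / z ^ 3 * Real.sin (2 * f z) + k / z ^ 2 * g z * Real.cos (2 * f z)

noncomputable def ddRR (k : ℝ) (f g : ℝ → ℝ) (z : ℝ) : ℝ :=
  -(2 * k / z ^ 3) * g z + 2 * k / z ^ 2 * RR k f g z - k / z * dRR k f g z
    + RR k f g z + z / 2 * dRR k f g z + 3 * k / z ^ 4 * Real.sin (2 * f z)
    - 4 * k / z ^ 3 * g z * Real.cos (2 * f z)
    + k / z ^ 2 * RR k f g z * Real.cos (2 * f z)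
    - 2 * k / z ^ 2 * (g z) ^ 2 * Real.sin (2 * f z)

noncomputable def E1 (k : ℝ) (f g : ℝ → ℝ) (z : ℝ) : ℝ :=
  ((3 - k) * z ^ 2 + z ^ 4 / 2) * g z + k / 2 * z * Real.sin (2 * f z)

noncomputable def E2 (k : ℝ) (f g : ℝ → ℝ) (z : ℝ) : ℝ :=
  ((6 - 2 * k) * z + 2 * z ^ 3) * g z + ((3 - k) * z ^ 2 + z ^ 4 / 2) * RR k f g z
    + k / 2 * Real.sin (2 * f z) + k * z * g z * Real.cos (2 * f z)

noncomputable def E3 (k : ℝ) (f g : ℝ → ℝ) (z : ℝ) : ℝ :=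
  (6 - 2 * k + 6 * z ^ 2) * g z + 2 * ((6 - 2 * k) * z + 2 * z ^ 3) * RR k f g z
    + ((3 - k) * z ^ 2 + z ^ 4 / 2) * dRR k f g z + 2 * k * g z * Real.cos (2 * f z)
    + k * z * RR k f g z * Real.cos (2 * f z) - 2 * k * z * (g z) ^ 2 * Real.sin (2 * f z)

noncomputable def E4 (k : ℝ) (f g : ℝ → ℝ) (z : ℝ) : ℝ :=
  12 * z * g z + 3 * (6 - 2 * k + 6 * z ^ 2) * RR k f g z
    + 3 * ((6 - 2 * k) * z + 2 * z ^ 3) * dRR k f g z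
    + ((3 - k) * z ^ 2 + z ^ 4 / 2) * ddRR k f g z
    + 3 * k * RR k f g z * Real.cos (2 * f z) + k * z * Real.cos (2 * f z) * dRR k f g z
    - 6 * k * (g z) ^ 2 * Real.sin (2 * f z)
    - 6 * k * z * g z * RR k f g z * Real.sin (2 * f z)
    - 4 * k * z * (g z) ^ 3 * Real.cos (2 * f z)

variable {k : ℝ} {f g : ℝ → ℝ} {y : ℝ}

lemma hasDerivAt_sin2f (hfd : HasDerivAt f (g y) y) :
    HasDerivAt (fun z => Real.sin (2 * f z)) (2 * g y * Real.cos (2 * f y)) y := by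
  have h := (Real.hasDerivAt_sin (2 * f y)).comp y (hfd.const_mul 2)
  exact h.congr_deriv (by ring)

lemma hasDerivAt_cos2f (hfd : HasDerivAt f (g y) y) :
    HasDerivAt (fun z => Real.cos (2 * f z)) (-(2 * g y * Real.sin (2 * f y))) y := by
  have h := (Real.hasDerivAt_cos (2 * f y)).comp y (hfd.const_mul 2)
  exact h.congr_deriv (by ring)

lemma hasDerivAt_RR (hy : y ≠ 0) (hfd : HasDerivAt f (g y) y)
    (hgd : HasDerivAt g (RR k f g y) y) :
    HasDerivAt (RR k f g) (dRR k f g y) y := by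
  have h1 : HasDerivAt (fun z : ℝ => -(k / z - z / 2))
      (-((0 * y - k * 1) / y ^ 2 - 1 / 2)) y :=
    (((hasDerivAt_const y k).div (hasDerivAt_id' y : HasDerivAt (fun z : ℝ => z) 1 y) hy).sub
      ((hasDerivAt_id' y : HasDerivAt (fun z : ℝ => z) 1 y).div_const 2)).neg
  have h2 : HasDerivAt (fun z : ℝ => k / (2 * z ^ 2))
      ((0 * (2 * y ^ 2) - k * (2 * (2 * y ^ (2 - 1)))) / (2 * y ^ 2) ^ 2) y :=
    (hasDerivAt_const y k).div ((hasDerivAt_pow 2 y).const_mul 2) (by positivity)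
  have h := (h1.mul hgd).add (h2.mul (hasDerivAt_sin2f hfd))
  refine h.congr_deriv ?_
  unfold dRR RR
  field_simp
  ring

lemma hasDerivAt_dRR (hy : y ≠ 0) (hfd : HasDerivAt f (g y) y)
    (hgd : HasDerivAt g (RR k f g y) y) :
    HasDerivAt (dRR k f g) (ddRR k f g y) y := by
  have hR := hasDerivAt_RR hy hfd hgd
  have hS := hasDerivAt_sin2f hfd
  have hC := hasDerivAt_cos2f hfd
  have hky2 : HasDerivAt (fun z : ℝ => k / z ^ 2)
      ((0 * y ^ 2 - k * (2 * y ^ (2 - 1))) / (y ^ 2) ^ 2) y :=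
    (hasDerivAt_const y k).div (hasDerivAt_pow 2 y) (by positivity)
  have hky : HasDerivAt (fun z : ℝ => k / z) ((0 * y - k * 1) / y ^ 2) y :=
    (hasDerivAt_const y k).div (hasDerivAt_id' y : HasDerivAt (fun z : ℝ => z) 1 y) hy
  have hky3 : HasDerivAt (fun z : ℝ => k / z ^ 3)
      ((0 * y ^ 3 - k * (3 * y ^ (3 - 1))) / (y ^ 3) ^ 2) y :=
    (hasDerivAt_const y k).div (hasDerivAt_pow 3 y) (by positivity)
  have h := (((((hky2.mul hgd).sub (hky.mul hR)).add (hgd.div_const 2)).add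
      (((hasDerivAt_id' y : HasDerivAt (fun z : ℝ => z) 1 y).div_const 2).mul hR)).sub
      (hky3.mul hS)).add ((hky2.mul hgd).mul hC)
  refine h.congr_deriv ?_
  unfold ddRR
  simp only [Pi.mul_apply]
  field_simp
  ring

lemma hasDerivAt_E1fun (hfd : HasDerivAt f (g y) y)
    (hgd : HasDerivAt g (RR k f g y) y) :
    HasDerivAt (E1 k f g) (E2 k f g y) y := by
  have hS := hasDerivAt_sin2f hfd
  have hA : HasDerivAt (fun z : ℝ => (3 - k) * z ^ 2 + z ^ 4 / 2)
      ((3 - k) * (2 * y ^ (2 - 1)) + 4 * y ^ (4 - 1) / 2) y :=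
    ((hasDerivAt_pow 2 y).const_mul (3 - k)).add ((hasDerivAt_pow 4 y).div_const 2)
  have h := (hA.mul hgd).add
    ((((hasDerivAt_id' y : HasDerivAt (fun z : ℝ => z) 1 y).const_mul (k / 2)).mul hS))
  have heq : E1 k f g = fun z => ((3 - k) * z ^ 2 + z ^ 4 / 2) * g z
      + k / 2 * z * Real.sin (2 * f z) := rfl
  rw [heq]
  refine h.congr_deriv ?_
  unfold E2
  ring

lemma hasDerivAt_E2fun (hy : y ≠ 0) (hfd : HasDerivAt f (g y) y)
    (hgd : HasDerivAt g (RR k f g y) y) :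
    HasDerivAt (E2 k f g) (E3 k f g y) y := by
  have hR := hasDerivAt_RR hy hfd hgd
  have hS := hasDerivAt_sin2f hfd
  have hC := hasDerivAt_cos2f hfd
  have hA : HasDerivAt (fun z : ℝ => (3 - k) * z ^ 2 + z ^ 4 / 2)
      ((3 - k) * (2 * y ^ (2 - 1)) + 4 * y ^ (4 - 1) / 2) y :=
    ((hasDerivAt_pow 2 y).const_mul (3 - k)).add ((hasDerivAt_pow 4 y).div_const 2)
  have hAp : HasDerivAt (fun z : ℝ => (6 - 2 * k) * z + 2 * z ^ 3)
      ((6 - 2 * k) * 1 + 2 * (3 * y ^ (3 - 1))) y :=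
    (((hasDerivAt_id' y : HasDerivAt (fun z : ℝ => z) 1 y).const_mul (6 - 2 * k))).add
      ((hasDerivAt_pow 3 y).const_mul 2)
  have hT4 : HasDerivAt (fun z : ℝ => k * z * g z * Real.cos (2 * f z))
      (((k * 1) * g y + (k * y) * RR k f g y) * Real.cos (2 * f y)
        + (k * y * g y) * (-(2 * g y * Real.sin (2 * f y)))) y :=
    ((((hasDerivAt_id' y : HasDerivAt (fun z : ℝ => z) 1 y).const_mul k).mul hgd).mul hC)
  have h := (((hAp.mul hgd).add (hA.mul hR)).add (hS.const_mul (k / 2))).add hT4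
  have heq : E2 k f g = fun z => ((6 - 2 * k) * z + 2 * z ^ 3) * g z
      + ((3 - k) * z ^ 2 + z ^ 4 / 2) * RR k f g z
      + k / 2 * Real.sin (2 * f z) + k * z * g z * Real.cos (2 * f z) := rfl
  rw [heq]
  refine h.congr_deriv ?_
  unfold E3
  ring

lemma hasDerivAt_E3fun (hy : y ≠ 0) (hfd : HasDerivAt f (g y) y)
    (hgd : HasDerivAt g (RR k f g y) y) :
    HasDerivAt (E3 k f g) (E4 k f g y) y := by
  have hR := hasDerivAt_RR hy hfd hgd
  have hdR := hasDerivAt_dRR hy hfd hgd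
  have hS := hasDerivAt_sin2f hfd
  have hC := hasDerivAt_cos2f hfd
  have hP1 : HasDerivAt (fun z : ℝ => 6 - 2 * k + 6 * z ^ 2)
      (0 + 6 * (2 * y ^ (2 - 1))) y :=
    (hasDerivAt_const y (6 - 2 * k)).add ((hasDerivAt_pow 2 y).const_mul 6)
  have hA : HasDerivAt (fun z : ℝ => (3 - k) * z ^ 2 + z ^ 4 / 2)
      ((3 - k) * (2 * y ^ (2 - 1)) + 4 * y ^ (4 - 1) / 2) y :=
    ((hasDerivAt_pow 2 y).const_mul (3 - k)).add ((hasDerivAt_pow 4 y).div_const 2)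
  have hAp2 : HasDerivAt (fun z : ℝ => 2 * ((6 - 2 * k) * z + 2 * z ^ 3))
      (2 * ((6 - 2 * k) * 1 + 2 * (3 * y ^ (3 - 1)))) y :=
    ((((hasDerivAt_id' y : HasDerivAt (fun z : ℝ => z) 1 y).const_mul (6 - 2 * k))).add
      ((hasDerivAt_pow 3 y).const_mul 2)).const_mul 2
  have hT5 : HasDerivAt (fun z : ℝ => k * z * RR k f g z * Real.cos (2 * f z))
      (((k * 1) * RR k f g y + (k * y) * dRR k f g y) * Real.cos (2 * f y)
        + (k * y * RR k f g y) * (-(2 * g y * Real.sin (2 * f y)))) y :=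
    ((((hasDerivAt_id' y : HasDerivAt (fun z : ℝ => z) 1 y).const_mul k).mul hR).mul hC)
  have hT6 : HasDerivAt (fun z : ℝ => 2 * k * z * (g z) ^ 2 * Real.sin (2 * f z))
      ((((2 * k) * 1) * (g y) ^ 2 + ((2 * k) * y) * (2 * g y ^ (2 - 1) * RR k f g y))
          * Real.sin (2 * f y)
        + (2 * k * y * (g y) ^ 2) * (2 * g y * Real.cos (2 * f y))) y :=
    ((((hasDerivAt_id' y : HasDerivAt (fun z : ℝ => z) 1 y).const_mul (2 * k)).mul
      (hgd.pow 2)).mul hS)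
  have h := ((((((hP1.mul hgd).add (hAp2.mul hR)).add (hA.mul hdR)).add
      ((hgd.const_mul (2 * k)).mul hC)).add hT5).sub hT6)
  have heq : E3 k f g = fun z => (6 - 2 * k + 6 * z ^ 2) * g z
      + 2 * ((6 - 2 * k) * z + 2 * z ^ 3) * RR k f g z
      + ((3 - k) * z ^ 2 + z ^ 4 / 2) * dRR k f g z + 2 * k * g z * Real.cos (2 * f z)
      + k * z * RR k f g z * Real.cos (2 * f z)
      - 2 * k * z * (g z) ^ 2 * Real.sin (2 * f z) := rfl
  rw [heq]
  refine h.congr_deriv ?_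
  unfold E4
  ring

lemma E2_key (hy : y ≠ 0) :
    E2 k f g y = (((3 - k) * y ^ 2 + y ^ 4 / 2) / y ^ 3 + 1 / y) * E1 k f g y
      + g y * y * (2 * (k - 3) + k * Real.cos (2 * f y)) := by
  unfold E2 E1 RR
  field_simp
  ring

lemma E3_degenerate (hy : y ≠ 0) (hs : Real.sin (2 * f y) = 0)
    (hc : Real.cos (2 * f y) = -1) :
    E3 6 f g y = (y ^ 2 - 6) * ((3 - 3 / 4 * y ^ 2 + 1 / 8 * y ^ 4) * g y) := by
  unfold E3 dRR RR
  rw [hs, hc]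
  field_simp
  ring

lemma E4_degenerate (hy : y ≠ 0) (hs : Real.sin (2 * f y) = 0)
    (hc : Real.cos (2 * f y) = -1) :
    E4 6 f g y = 24 * y * (g y) ^ 3
      + (y ^ 2 - 6) * ((-12 / y + 3 * y - 3 / 8 * y ^ 3 + 1 / 16 * y ^ 5) * g y) := by
  unfold E4 ddRR dRR RR
  rw [hs, hc]
  field_simp
  ring

end HDPaux

set_option maxHeartbeats 1600000 in
/-- For `d ≥ 7` and a smooth solution `f` of the harmonic map shrinker equation on
`[0,∞)` with `f(0) = 0` and `f'(0) = a > 0`, the function `h(y) = y³ f'(y)` satisfies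
`h'(y) > 0` for all `y > 0`. -/
theorem h_deriv_positive (d : ℕ) (hd : 7 ≤ d) (a : ℝ) (ha : 0 < a) (f : ℝ → ℝ)
    (hf : ContDiffOn ℝ (⊤ : ℕ∞) f (Ici 0))
    (hode : ∀ y : ℝ, 0 < y →
      deriv (deriv f) y + (((d : ℝ) - 1) / y - y / 2) * deriv f y
        - ((d : ℝ) - 1) / (2 * y ^ 2) * Real.sin (2 * f y) = 0)
    (hf0 : f 0 = 0) (hf'0 : derivWithin f (Ici 0) 0 = a) :
    ∀ y : ℝ, 0 < y → 0 < deriv (fun z => z ^ 3 * deriv f z) y := by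
  by_contra hcon
  push_neg at hcon
  obtain ⟨b, hb0, hble⟩ := hcon
  set k : ℝ := (d : ℝ) - 1 with hk
  have hk6 : (6 : ℝ) ≤ k := by
    have h7 : (7 : ℝ) ≤ (d : ℝ) := by exact_mod_cast hd
    rw [hk]; linarith
  set g : ℝ → ℝ := deriv f with hgdef
  -- basic regularity facts
  have hone : (1 : WithTop ℕ∞) ≤ ((⊤ : ℕ∞) : WithTop ℕ∞) := by exact_mod_cast le_top
  have hfd : ∀ y : ℝ, 0 < y → HasDerivAt f (g y) y := fun y hy =>
    ((hf.contDiffAt (Ici_mem_nhds hy)).differentiableAt (by simp)).hasDerivAt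
  have hgC : ContDiffOn ℝ ((⊤ : ℕ∞) : WithTop ℕ∞) g (Ioi 0) :=
    (hf.mono (fun x hx => le_of_lt hx)).deriv_of_isOpen isOpen_Ioi
      (le_of_eq (rfl : ((⊤ : ℕ∞) : WithTop ℕ∞) + 1 = ((⊤ : ℕ∞) : WithTop ℕ∞)))
  have hgd : ∀ y : ℝ, 0 < y → HasDerivAt g (HDPaux.RR k f g y) y := by
    intro y hy
    have hdga := ((hgC.contDiffAt (isOpen_Ioi.mem_nhds hy)).differentiableAt (by simp)).hasDerivAt
    have heq : deriv g y = HDPaux.RR k f g y := by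
      unfold HDPaux.RR
      have hy' : y ≠ 0 := ne_of_gt hy
      linear_combination hode y hy
    rwa [heq] at hdga
  have hE1d : ∀ y : ℝ, 0 < y → HasDerivAt (HDPaux.E1 k f g) (HDPaux.E2 k f g y) y :=
    fun y hy => HDPaux.hasDerivAt_E1fun (hfd y hy) (hgd y hy)
  have hE2d : ∀ y : ℝ, 0 < y → HasDerivAt (HDPaux.E2 k f g) (HDPaux.E3 k f g y) y :=
    fun y hy => HDPaux.hasDerivAt_E2fun (ne_of_gt hy) (hfd y hy) (hgd y hy)
  have hE3d : ∀ y : ℝ, 0 < y → HasDerivAt (HDPaux.E3 k f g) (HDPaux.E4 k f g y) y :=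
    fun y hy => HDPaux.hasDerivAt_E3fun (ne_of_gt hy) (hfd y hy) (hgd y hy)
  -- the derivative of h(z) = z^3 f'(z) is E1
  have hhd : ∀ y : ℝ, 0 < y → HasDerivAt (fun z => z ^ 3 * g z) (HDPaux.E1 k f g y) y := by
    intro y hy
    have h := (hasDerivAt_pow 3 y).mul (hgd y hy)
    refine h.congr_deriv ?_
    unfold HDPaux.E1 HDPaux.RR
    have hy' : y ≠ 0 := ne_of_gt hy
    field_simp
    ring
  have hderiv_eq : ∀ y : ℝ, 0 < y → deriv (fun z => z ^ 3 * g z) y = HDPaux.E1 k f g y :=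
    fun y hy => (hhd y hy).deriv
  have hE1b : HDPaux.E1 k f g b ≤ 0 := by rw [← hderiv_eq b hb0]; exact hble
  have hE1cont : ∀ y : ℝ, 0 < y → ContinuousAt (HDPaux.E1 k f g) y :=
    fun y hy => (hE1d y hy).continuousAt
  -- Step C : positivity of E1 near 0
  have h3a : (0 : ℝ) < 3 * a := by linarith
  have hgW : ContinuousOn (derivWithin f (Ici 0)) (Ici 0) :=
    hf.continuousOn_derivWithin (uniqueDiffOn_Ici 0) hone
  have hgtends : Tendsto g (𝓝[>] (0 : ℝ)) (𝓝 a) := by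
    have h1 : Tendsto (derivWithin f (Ici 0)) (𝓝[Ici 0] 0) (𝓝 a) := by
      have h := hgW 0 self_mem_Ici
      rw [ContinuousWithinAt, hf'0] at h
      exact h
    have h2 : Tendsto (derivWithin f (Ici 0)) (𝓝[>] 0) (𝓝 a) :=
      h1.mono_left (nhdsWithin_mono 0 Ioi_subset_Ici_self)
    refine h2.congr' ?_
    filter_upwards [self_mem_nhdsWithin] with y hy
    rw [hgdef]
    exact derivWithin_of_mem_nhds (Ici_mem_nhds hy)
  have hfd0 : HasDerivWithinAt f a (Ici 0) 0 := by
    have h := (hf.differentiableOn (by simp) 0 self_mem_Ici).hasDerivWithinAt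
    rwa [hf'0] at h
  have hphi : HasDerivWithinAt (fun z => Real.sin (2 * f z)) (2 * a) (Ici 0) 0 := by
    have h := (Real.hasDerivAt_sin (2 * f 0)).comp_hasDerivWithinAt 0 (hfd0.const_mul 2)
    rw [hf0] at h
    norm_num at h
    exact h
  have hsintends : Tendsto (fun y => Real.sin (2 * f y) / y) (𝓝[>] 0) (𝓝 (2 * a)) := by
    have h := hasDerivWithinAt_iff_tendsto_slope.1 hphi
    have hsub : Ioi (0 : ℝ) ⊆ Ici 0 \ {0} := fun z hz => ⟨mem_Ici.2 (le_of_lt hz), ne_of_gt hz⟩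
    have h2 := h.mono_left (nhdsWithin_mono 0 hsub)
    refine h2.congr' ?_
    filter_upwards [self_mem_nhdsWithin] with y hy
    rw [slope_def_field, hf0]
    norm_num
  have hqt : Tendsto (fun y => (3 - k + y ^ 2 / 2) * g y + k / 2 * (Real.sin (2 * f y) / y))
      (𝓝[>] 0) (𝓝 (3 * a)) := by
    have hy2 : Tendsto (fun y : ℝ => 3 - k + y ^ 2 / 2) (𝓝[>] 0) (𝓝 (3 - k + 0 ^ 2 / 2)) :=
      ((continuous_const.add ((continuous_pow 2).div_const 2)).tendsto 0).mono_left
        nhdsWithin_le_nhds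
    have h := (hy2.mul hgtends).add (hsintends.const_mul (k / 2))
    have hval : (3 - k + 0 ^ 2 / 2) * a + k / 2 * (2 * a) = 3 * a := by ring
    rwa [hval] at h
  have hposev : ∀ᶠ y in 𝓝[>] (0 : ℝ),
      0 < (3 - k + y ^ 2 / 2) * g y + k / 2 * (Real.sin (2 * f y) / y) :=
    hqt.eventually (eventually_gt_nhds h3a)
  obtain ⟨δ, hδmem, hδsub⟩ := mem_nhdsGT_iff_exists_Ioo_subset.1 hposev
  have hδpos : (0 : ℝ) < δ := hδmem
  have hE1small : ∀ y : ℝ, 0 < y → y < δ → 0 < HDPaux.E1 k f g y := by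
    intro y hy hyd
    have hq := hδsub ⟨hy, hyd⟩
    have heq : HDPaux.E1 k f g y
        = y ^ 2 * ((3 - k + y ^ 2 / 2) * g y + k / 2 * (Real.sin (2 * f y) / y)) := by
      unfold HDPaux.E1
      have hy' : y ≠ 0 := ne_of_gt hy
      field_simp
    rw [heq]
    exact mul_pos (pow_pos hy 2) hq
  -- Step D : the first touching point y₀
  set SS : Set ℝ := {y | δ ≤ y ∧ HDPaux.E1 k f g y ≤ 0} with hSSdef
  have hbS : b ∈ SS := by
    constructor
    · by_contra hlt
      push_neg at hlt
      exact absurd hE1b (not_le.2 (hE1small b hb0 hlt))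
    · exact hE1b
  have hSne : SS.Nonempty := ⟨b, hbS⟩
  have hSbd : BddBelow SS := ⟨δ, fun x hx => hx.1⟩
  set y₀ : ℝ := sInf SS with hy₀def
  have hy₀δ : δ ≤ y₀ := le_csInf hSne (fun x hx => hx.1)
  have hy₀pos : 0 < y₀ := lt_of_lt_of_le hδpos hy₀δ
  have hE1y₀le : HDPaux.E1 k f g y₀ ≤ 0 := by
    by_contra hpos
    push_neg at hpos
    have hev : ∀ᶠ z in 𝓝 y₀, 0 < HDPaux.E1 k f g z :=
      (hE1cont y₀ hy₀pos).eventually (eventually_gt_nhds hpos)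
    obtain ⟨ε, hε, hball⟩ := Metric.eventually_nhds_iff.1 hev
    obtain ⟨x, hxS, hxlt⟩ := exists_lt_of_csInf_lt hSne
      (lt_add_of_pos_right y₀ hε)
    have hxge : y₀ ≤ x := csInf_le hSbd hxS
    have hdist : dist x y₀ < ε := by
      rw [Real.dist_eq, abs_of_nonneg (by linarith)]
      linarith
    exact absurd hxS.2 (not_le.2 (hball hdist))
  have hE1pos : ∀ y : ℝ, 0 < y → y < y₀ → 0 < HDPaux.E1 k f g y := by
    intro y hy hylt
    rcases lt_or_ge y δ with h | h
    · exact hE1small y hy h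
    · by_contra hle
      push_neg at hle
      have hyS : y ∈ SS := ⟨h, hle⟩
      exact absurd (csInf_le hSbd hyS) (not_le.2 hylt)
  have hE1y₀ : HDPaux.E1 k f g y₀ = 0 := by
    refine le_antisymm hE1y₀le ?_
    have hc : Tendsto (HDPaux.E1 k f g) (𝓝[<] y₀) (𝓝 (HDPaux.E1 k f g y₀)) :=
      ((hE1cont y₀ hy₀pos)).tendsto.mono_left nhdsWithin_le_nhds
    refine ge_of_tendsto hc ?_
    filter_upwards [Ioo_mem_nhdsLT_of_mem (⟨hy₀pos, le_refl y₀⟩ : y₀ ∈ Ioc 0 y₀)]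
      with z hz
    exact le_of_lt (hE1pos z hz.1 hz.2)
  -- Step E : g y₀ > 0
  have hconth : ContinuousOn (fun z => z ^ 3 * g z) (Icc 0 y₀) := by
    have hF : ContinuousOn (fun z => z ^ 3 * derivWithin f (Ici 0) z) (Icc 0 y₀) :=
      ((continuous_pow 3).continuousOn).mul (hgW.mono (Icc_subset_Ici_self))
    refine hF.congr ?_
    intro z hz
    show z ^ 3 * g z = z ^ 3 * derivWithin f (Ici 0) z
    rcases eq_or_lt_of_le hz.1 with h0 | h0
    · rw [← h0]; norm_num
    · rw [derivWithin_of_mem_nhds (Ici_mem_nhds h0)]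
  have hmono : StrictMonoOn (fun z => z ^ 3 * g z) (Icc 0 y₀) := by
    refine strictMonoOn_of_deriv_pos (convex_Icc 0 y₀) hconth ?_
    intro x hx
    rw [interior_Icc] at hx
    rw [hderiv_eq x hx.1]
    exact hE1pos x hx.1 hx.2
  have hgy₀pos : 0 < g y₀ := by
    have h := hmono (⟨le_refl 0, le_of_lt hy₀pos⟩ : (0:ℝ) ∈ Icc (0:ℝ) y₀)
      (⟨le_of_lt hy₀pos, le_refl y₀⟩ : y₀ ∈ Icc (0:ℝ) y₀) hy₀pos
    norm_num at h
    nlinarith [pow_pos hy₀pos 3]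
  -- Step F : E2 y₀ ≤ 0
  have hE2y₀le : HDPaux.E2 k f g y₀ ≤ 0 := by
    have hslope := hasDerivAt_iff_tendsto_slope.1 (hE1d y₀ hy₀pos)
    have h2 : Tendsto (slope (HDPaux.E1 k f g) y₀) (𝓝[<] y₀) (𝓝 (HDPaux.E2 k f g y₀)) :=
      hslope.mono_left (nhdsWithin_mono _ (fun z hz => ne_of_lt hz))
    refine le_of_tendsto h2 ?_
    filter_upwards [Ioo_mem_nhdsLT_of_mem (⟨hy₀pos, le_refl y₀⟩ : y₀ ∈ Ioc 0 y₀)]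
      with z hz
    rw [slope_def_field, hE1y₀]
    have h1 := hE1pos z hz.1 hz.2
    have h2' : z - y₀ < 0 := by linarith [hz.2]
    exact le_of_lt (div_neg_of_pos_of_neg (by linarith) h2')
  -- Step G : forced degenerate configuration
  have hkey := HDPaux.E2_key (k := k) (f := f) (g := g) (ne_of_gt hy₀pos)
  rw [hE1y₀] at hkey
  have hcos2 : Real.cos (2 * f y₀) = 2 * Real.cos (f y₀) ^ 2 - 1 := Real.cos_two_mul (f y₀)
  have hE2val : HDPaux.E2 k f g y₀
      = g y₀ * y₀ * ((k - 6) + 2 * k * Real.cos (f y₀) ^ 2) := by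
    rw [hkey, hcos2]; ring
  have hfac : (k - 6) + 2 * k * Real.cos (f y₀) ^ 2 ≤ 0 := by
    by_contra hgt
    push_neg at hgt
    have h1 : 0 < g y₀ * y₀ * ((k - 6) + 2 * k * Real.cos (f y₀) ^ 2) :=
      mul_pos (mul_pos hgy₀pos hy₀pos) hgt
    rw [← hE2val] at h1
    linarith
  have h2k : 0 ≤ 2 * k * Real.cos (f y₀) ^ 2 :=
    mul_nonneg (by linarith) (sq_nonneg _)
  have hcsq : Real.cos (f y₀) ^ 2 = 0 := by
    have hT : 2 * k * Real.cos (f y₀) ^ 2 = 0 := le_antisymm (by linarith) h2k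
    rcases mul_eq_zero.1 hT with h | h
    · exfalso; linarith
    · exact h
  have hcosfy : Real.cos (f y₀) = 0 :=
    pow_eq_zero_iff (two_ne_zero) |>.1 hcsq
  have hkeq : k = 6 := by
    have : 2 * k * Real.cos (f y₀) ^ 2 = 0 := by rw [hcsq]; ring
    linarith
  have hs0 : Real.sin (2 * f y₀) = 0 := by rw [Real.sin_two_mul, hcosfy]; ring
  have hc1 : Real.cos (2 * f y₀) = -1 := by rw [hcos2, hcosfy]; norm_num
  have hy₀sq : y₀ ^ 2 = 6 := by
    have h := hE1y₀
    unfold HDPaux.E1 at h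
    rw [hs0, hkeq] at h
    have h2 : y₀ ^ 2 * (y₀ ^ 2 - 6) * g y₀ = 0 := by linarith [h]
    rcases mul_eq_zero.1 h2 with h3 | h3
    · rcases mul_eq_zero.1 h3 with h4 | h4
      · exact absurd h4 (by positivity)
      · linarith
    · exact absurd h3 (ne_of_gt hgy₀pos)
  have hE2y₀ : HDPaux.E2 k f g y₀ = 0 := by
    rw [hE2val, hcosfy, hkeq]; ring
  have hE3y₀ : HDPaux.E3 k f g y₀ = 0 := by
    rw [hkeq, HDPaux.E3_degenerate (ne_of_gt hy₀pos) hs0 hc1, hy₀sq]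
    norm_num
  have hE4pos : 0 < HDPaux.E4 k f g y₀ := by
    rw [hkeq, HDPaux.E4_degenerate (ne_of_gt hy₀pos) hs0 hc1, hy₀sq]
    have h1 : (6 : ℝ) - 6 = 0 := by norm_num
    rw [h1, zero_mul, add_zero]
    nlinarith [mul_pos hy₀pos (pow_pos hgy₀pos 3)]
  -- Step I : contradiction via third-order behaviour
  have hslope3 := hasDerivAt_iff_tendsto_slope.1 (hE3d y₀ hy₀pos)
  have h3l : Tendsto (slope (HDPaux.E3 k f g) y₀) (𝓝[<] y₀) (𝓝 (HDPaux.E4 k f g y₀)) :=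
    hslope3.mono_left (nhdsWithin_mono _ (fun z hz => ne_of_lt hz))
  have hev3 : ∀ᶠ z in 𝓝[<] y₀, HDPaux.E3 k f g z < 0 := by
    filter_upwards [h3l.eventually (eventually_gt_nhds hE4pos), self_mem_nhdsWithin]
      with z hz hz'
    rw [slope_def_field, hE3y₀, sub_zero] at hz
    have hzy : z - y₀ < 0 := sub_neg.2 hz'
    by_contra hge
    push_neg at hge
    have : HDPaux.E3 k f g z / (z - y₀) ≤ 0 := div_nonpos_of_nonneg_of_nonpos hge (le_of_lt hzy)
    linarith
  obtain ⟨l, hl, hIoo⟩ := mem_nhdsLT_iff_exists_Ioo_subset.1 hev3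
  set m : ℝ := max l (y₀ / 2) with hmdef
  have hmlt : m < y₀ := max_lt hl (by linarith)
  have hmpos : 0 < m := lt_of_lt_of_le (by linarith : (0:ℝ) < y₀ / 2) (le_max_right _ _)
  have hE2pos : ∀ z ∈ Ico m y₀, 0 < HDPaux.E2 k f g z := by
    have hanti : StrictAntiOn (HDPaux.E2 k f g) (Icc m y₀) := by
      refine strictAntiOn_of_deriv_neg (convex_Icc m y₀) ?_ ?_
      · intro x hx
        exact ((hE2d x (lt_of_lt_of_le hmpos hx.1)).continuousAt).continuousWithinAt
      · intro x hx
        rw [interior_Icc] at hx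
        rw [(hE2d x (lt_trans hmpos hx.1)).deriv]
        exact hIoo ⟨lt_of_le_of_lt (le_max_left l _) hx.1, hx.2⟩
    intro z hz
    have h := hanti (⟨hz.1, le_of_lt hz.2⟩ : z ∈ Icc m y₀)
      (⟨le_of_lt (lt_of_le_of_lt hz.1 hz.2), le_refl y₀⟩ : y₀ ∈ Icc m y₀) hz.2
    rwa [hE2y₀] at h
  have hmono1 : StrictMonoOn (HDPaux.E1 k f g) (Icc m y₀) := by
    refine strictMonoOn_of_deriv_pos (convex_Icc m y₀) ?_ ?_
    · intro x hx
      exact ((hE1d x (lt_of_lt_of_le hmpos hx.1)).continuousAt).continuousWithinAt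
    · intro x hx
      rw [interior_Icc] at hx
      rw [(hE1d x (lt_trans hmpos hx.1)).deriv]
      exact hE2pos x ⟨le_of_lt hx.1, hx.2⟩
  have hfinal := hmono1 (⟨le_refl m, le_of_lt hmlt⟩ : m ∈ Icc m y₀)
    (⟨le_of_lt hmlt, le_refl y₀⟩ : y₀ ∈ Icc m y₀) hmlt
  rw [hE1y₀] at hfinal
  exact absurd hfinal (not_lt.2 (le_of_lt (hE1pos m hmpos hmlt)))
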